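/- Let E be a real normed space, K ⊆ E a nontrivial cone with norm-base B_K, and A ⊆ E a nontrivial cone with norm-base B_A. Assume that cl S_{−cl(conv K)} is weakly compact. Then the following are equivalent: (1) cl S_A^0 ∩ cl S_{−K} = ∅; (2) cl S_{cl A}^0 ∩ cl S_{−cl(conv K)} = ∅; (3) there exists (x*, α) ∈ K^{aw#} with α > 0 such that x*(a) + α‖a‖ > 0 for all a ∈ A \ {0} and x*(k) + α‖k‖ < 0 for all k ∈ (−K) \ {0}; (4) there exists (x*, α) ∈ K^{aw#} with α > 0 such that x*(a) + α‖a‖ > 0 for all a ∈ (cl A) \ {0} and x*(k) + α‖k‖ < 0 for all k ∈ (−cl(conv K)) \ {0}. -/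

import Mathlib

open Set

variable {E : Type*} [NormedAddCommGroup E] [NormedSpace ℝ E]

/-- `K` is a cone: contains `0` and is closed under nonnegative scalar multiplication. -/
def IsCone (K : Set E) : Prop :=
  (0 : E) ∈ K ∧ ∀ t : ℝ, 0 ≤ t → ∀ x ∈ K, t • x ∈ K

/-- A cone is nontrivial if it is neither `{0}` nor the whole space. -/
def IsNontrivialCone (K : Set E) : Prop :=
  IsCone K ∧ K ≠ {0} ∧ K ≠ Set.univ

/-- The norm-base of a cone: its intersection with the unit sphere. -/
def normBase (K : Set E) : Set E := {x ∈ K | ‖x‖ = 1}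

/-- Closure of a set with respect to the weak topology `σ(E, E*)`. -/
noncomputable def wClosure (S : Set E) : Set E :=
  (toWeakSpace ℝ E).symm '' closure ((toWeakSpace ℝ E) '' S)

/-- A set is weakly compact if it is compact in the weak topology `σ(E, E*)`. -/
def WeaklyCompact (S : Set E) : Prop :=
  IsCompact ((toWeakSpace ℝ E) '' S)

/-- A set is weakly closed if it equals its weak closure. -/
noncomputable def WeaklyClosed (S : Set E) : Prop :=
  wClosure S = S

/-- The (topological) dual cone `K⁺`. -/
def dualCone (K : Set E) : Set (E →L[ℝ] ℝ) :=
  {f | ∀ k ∈ K, 0 ≤ f k}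

/-- The set `K^#` of functionals strictly positive on `K \ {0}`. -/
def sharpCone (K : Set E) : Set (E →L[ℝ] ℝ) :=
  {f | ∀ k ∈ K, k ≠ 0 → 0 < f k}

/-- The set `K^{w#}` of functionals strictly positive on the weak closure of the norm-base. -/
noncomputable def wSharpCone (K : Set E) : Set (E →L[ℝ] ℝ) :=
  {f | ∀ x ∈ wClosure (normBase K), 0 < f x}

/-- The algebraic interior (core) of a set in a real vector space. -/
def core {X : Type*} [AddCommGroup X] [Module ℝ X] (Ω : Set X) : Set X :=
  {x ∈ Ω | ∀ v : X, ∃ ε > 0, ∀ t ∈ Set.Icc (0 : ℝ) ε, x + t • v ∈ Ω}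

/-- The augmented dual cone `K^{a+}`. -/
def augDualCone (K : Set E) : Set ((E →L[ℝ] ℝ) × ℝ) :=
  {p | 0 ≤ p.2 ∧ ∀ y ∈ K, 0 ≤ p.1 y - p.2 * ‖y‖}

/-- The set `K^{a#}`. -/
def augSharpCone (K : Set E) : Set ((E →L[ℝ] ℝ) × ℝ) :=
  {p | 0 ≤ p.2 ∧ p.1 ∈ sharpCone K ∧ ∀ y ∈ K, y ≠ 0 → 0 < p.1 y - p.2 * ‖y‖}

/-- The set `K^{aw#}`. -/
noncomputable def augWSharpCone (K : Set E) : Set ((E →L[ℝ] ℝ) × ℝ) :=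
  {p | 0 ≤ p.2 ∧ p.1 ∈ sharpCone K ∧ ∀ y ∈ wClosure (normBase K), p.2 < p.1 y}

/-- `S_C = conv(B_C)`. -/
noncomputable def convBase (C : Set E) : Set E := convexHull ℝ (normBase C)

/-- `S_C^0 = conv({0} ∪ B_C)`. -/
noncomputable def convBase0 (C : Set E) : Set E := convexHull ℝ ({0} ∪ normBase C)

/-! ### Auxiliary lemmas -/

noncomputable instance : ContinuousSMul ℝ (WeakSpace ℝ E) :=
  WeakBilin.instContinuousSMul (topDualPairing ℝ E).flip

noncomputable instance : LocallyConvexSpace ℝ (WeakSpace ℝ E) :=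
  WeakBilin.locallyConvexSpace (B := (topDualPairing ℝ E).flip)

/-- A continuous linear functional, as a functional on the weak space. -/
noncomputable def weakCLM17 (f : E →L[ℝ] ℝ) : WeakSpace ℝ E →L[ℝ] ℝ where
  toLinearMap := (f : E →ₗ[ℝ] ℝ).comp ((toWeakSpace ℝ E).symm : WeakSpace ℝ E →ₗ[ℝ] E)
  cont := WeakBilin.eval_continuous (topDualPairing ℝ E).flip f

lemma weakCLM17_apply (f : E →L[ℝ] ℝ) (x : E) : weakCLM17 f (toWeakSpace ℝ E x) = f x := rfl

lemma mem_wClosure17 {S : Set E} {y : E} :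
    y ∈ wClosure S ↔ toWeakSpace ℝ E y ∈ closure (toWeakSpace ℝ E '' S) := by
  constructor
  · rintro ⟨z, hz, rfl⟩
    simpa using hz
  · intro h
    exact ⟨_, h, by simp⟩

lemma subset_wClosure17 (S : Set E) : S ⊆ wClosure S := fun x hx =>
  mem_wClosure17.2 (subset_closure ⟨x, hx, rfl⟩)

lemma le_on_wClosure17 (f : E →L[ℝ] ℝ) {c : ℝ} {S : Set E} (h : ∀ x ∈ S, c ≤ f x) :
    ∀ y ∈ wClosure S, c ≤ f y := by
  intro y hy
  rw [mem_wClosure17] at hy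
  have hcl : closure (toWeakSpace ℝ E '' S) ⊆ {z | c ≤ weakCLM17 f z} :=
    closure_minimal (by rintro - ⟨x, hx, rfl⟩; exact h x hx)
      (isClosed_le continuous_const (weakCLM17 f).continuous)
  exact hcl hy

lemma isClosed_weak_image17 {P : Set E} (hP : Convex ℝ P) (hPc : IsClosed P) :
    IsClosed (toWeakSpace ℝ E '' P) := by
  have h := hP.toWeakSpace_closure (𝕜 := ℝ)
  rw [hPc.closure_eq] at h
  rw [h]
  exact isClosed_closure

lemma weaklyCompact_of_subset17 {C D : Set E} (h : WeaklyCompact C) (hD : Convex ℝ D)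
    (hDc : IsClosed D) (hsub : D ⊆ C) : WeaklyCompact D :=
  h.of_isClosed_subset (isClosed_weak_image17 hD hDc) (Set.image_mono hsub)

lemma weak_separation17 {P Q : Set E} (hPconv : Convex ℝ P) (hPcl : IsClosed P)
    (hQconv : Convex ℝ Q) (hQcomp : WeaklyCompact Q) (hdisj : P ∩ Q = ∅) :
    ∃ (f : E →L[ℝ] ℝ) (u v : ℝ), (∀ a ∈ P, f a < u) ∧ u < v ∧ ∀ b ∈ Q, v < f b := by
  have hT : Disjoint (toWeakSpace ℝ E '' P) (toWeakSpace ℝ E '' Q) :=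
    Set.disjoint_image_of_injective (toWeakSpace ℝ E).injective
      (Set.disjoint_iff_inter_eq_empty.2 hdisj)
  obtain ⟨g, u, v, h1, h2, h3⟩ := geometric_hahn_banach_closed_compact
    (hPconv.linear_image (toWeakSpace ℝ E).toLinearMap) (isClosed_weak_image17 hPconv hPcl)
    (hQconv.linear_image (toWeakSpace ℝ E).toLinearMap) hQcomp hT
  exact ⟨g.comp (toWeakSpaceCLM ℝ E), u, v,
    fun a ha => h1 _ ⟨a, ha, rfl⟩, h2, fun b hb => h3 _ ⟨b, hb, rfl⟩⟩

lemma exists_min_wClosure17 (f : E →L[ℝ] ℝ) {S C : Set E} (hS : S.Nonempty)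
    (hC : WeaklyCompact C) (hCconv : Convex ℝ C) (hCcl : IsClosed C)
    (hsub : ∀ x ∈ S, -x ∈ C) :
    ∃ y₀ ∈ wClosure S, ∀ y ∈ wClosure S, f y₀ ≤ f y := by
  have hZc : IsClosed (toWeakSpace ℝ E '' C) := isClosed_weak_image17 hCconv hCcl
  have hsub' : closure (toWeakSpace ℝ E '' S) ⊆ -(toWeakSpace ℝ E '' C) := by
    refine closure_minimal ?_ hZc.neg
    rintro - ⟨x, hx, rfl⟩
    rw [Set.mem_neg]
    exact ⟨-x, hsub x hx, map_neg _ x⟩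
  have hcompS : IsCompact (closure (toWeakSpace ℝ E '' S)) :=
    hC.neg.of_isClosed_subset isClosed_closure hsub'
  have hne : (closure (toWeakSpace ℝ E '' S)).Nonempty := (hS.image _).closure
  obtain ⟨z₀, hz₀, hmin⟩ := hcompS.exists_isMinOn hne (weakCLM17 f).continuous.continuousOn
  refine ⟨(toWeakSpace ℝ E).symm z₀, ⟨z₀, hz₀, rfl⟩, fun y hy => ?_⟩
  rw [mem_wClosure17] at hy
  exact hmin hy

lemma IsCone.closure17 {K : Set E} (h : IsCone K) : IsCone (closure K) := by
  refine ⟨subset_closure h.1, fun t ht x hx => ?_⟩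
  have h1 : (fun y : E => t • y) '' closure K ⊆ closure ((fun y : E => t • y) '' K) :=
    image_closure_subset_closure_image (continuous_const_smul t)
  have h2 : closure ((fun y : E => t • y) '' K) ⊆ closure K :=
    closure_mono (by rintro - ⟨y, hy, rfl⟩; exact h.2 t ht y hy)
  exact h2 (h1 ⟨x, hx, rfl⟩)

lemma IsCone.convexHull17 {K : Set E} (h : IsCone K) : IsCone (convexHull ℝ K) := by
  refine ⟨subset_convexHull ℝ K h.1, fun t ht x hx => ?_⟩
  have hsub : convexHull ℝ K ⊆ {y : E | t • y ∈ convexHull ℝ K} := by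
    refine convexHull_min (fun y hy => subset_convexHull ℝ K (h.2 t ht y hy)) ?_
    intro a ha b hb p q hp hq hpq
    simp only [Set.mem_setOf_eq] at *
    have he : t • (p • a + q • b) = p • (t • a) + q • (t • b) := by
      rw [smul_add, smul_comm t p, smul_comm t q]
    rw [he]
    exact (convex_convexHull ℝ K) ha hb hp hq hpq
  exact hsub hx

lemma IsCone.neg17 {K : Set E} (h : IsCone K) : IsCone (-K) := by
  refine ⟨by rw [Set.mem_neg, neg_zero]; exact h.1, fun t ht x hx => ?_⟩
  rw [Set.mem_neg] at hx ⊢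
  rw [← smul_neg]
  exact h.2 t ht _ hx

lemma mem_normBase_smul17 {K : Set E} (h : IsCone K) {x : E} (hx : x ∈ K) (hx0 : x ≠ 0) :
    ‖x‖⁻¹ • x ∈ normBase K := by
  have hn : ‖x‖ ≠ 0 := norm_ne_zero_iff.2 hx0
  refine ⟨h.2 _ (by positivity) x hx, ?_⟩
  rw [norm_smul, norm_inv, norm_norm, inv_mul_cancel₀ hn]

omit [NormedSpace ℝ E] in
lemma normBase_mono17 {S T : Set E} (h : S ⊆ T) : normBase S ⊆ normBase T :=
  fun _ hx => ⟨h hx.1, hx.2⟩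

theorem stmt17 (K A : Set E) (hK : IsNontrivialCone K) (hA : IsNontrivialCone A)
    (hcomp : WeaklyCompact (closure (convBase (-(closure (convexHull ℝ K)))))) :
    List.TFAE [
      closure (convBase0 A) ∩ closure (convBase (-K)) = ∅,
      closure (convBase0 (closure A)) ∩
        closure (convBase (-(closure (convexHull ℝ K)))) = ∅,
      (∃ f : E →L[ℝ] ℝ, ∃ α : ℝ, (f, α) ∈ augWSharpCone K ∧ 0 < α ∧
        (∀ a ∈ A, a ≠ 0 → 0 < f a + α * ‖a‖) ∧
        (∀ k ∈ (-K : Set E), k ≠ 0 → f k + α * ‖k‖ < 0)),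
      (∃ f : E →L[ℝ] ℝ, ∃ α : ℝ, (f, α) ∈ augWSharpCone K ∧ 0 < α ∧
        (∀ a ∈ closure A, a ≠ 0 → 0 < f a + α * ‖a‖) ∧
        (∀ k ∈ -(closure (convexHull ℝ K)), k ≠ 0 → f k + α * ‖k‖ < 0))] := by
  have hKcone := hK.1
  have hAcone := hA.1
  have hcKcone : IsCone (closure (convexHull ℝ K)) := hKcone.convexHull17.closure17
  have hclAcone : IsCone (closure A) := hAcone.closure17
  have hKsubcK : K ⊆ closure (convexHull ℝ K) := (subset_convexHull ℝ K).trans subset_closure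
  have hnegKsub : (-K : Set E) ⊆ -(closure (convexHull ℝ K)) := fun x hx => by
    rw [Set.mem_neg] at hx ⊢
    exact hKsubcK hx
  have hQ12 : closure (convBase (-K)) ⊆ closure (convBase (-(closure (convexHull ℝ K)))) :=
    closure_mono (convexHull_mono (normBase_mono17 hnegKsub))
  have hP12 : closure (convBase0 A) ⊆ closure (convBase0 (closure A)) :=
    closure_mono (convexHull_mono (Set.union_subset_union_right _
      (normBase_mono17 subset_closure)))
  have hQ₁comp : WeaklyCompact (closure (convBase (-K))) :=
    weaklyCompact_of_subset17 hcomp ((convex_convexHull ℝ _).closure) isClosed_closure hQ12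
  -- nonempty norm base of K
  obtain ⟨k₀, hk₀K, hk₀⟩ : ∃ k ∈ K, k ≠ 0 := by
    by_contra hcon
    push_neg at hcon
    exact hK.2.1 (Set.eq_singleton_iff_unique_mem.2 ⟨hKcone.1, fun x hx => hcon x hx⟩)
  have hBKne : (normBase K).Nonempty := ⟨_, mem_normBase_smul17 hKcone hk₀K hk₀⟩
  -- The separation argument, used for both 1 → 3 and 2 → 4.
  have sep : ∀ A' K' : Set E, IsCone A' → IsCone K' → K ⊆ K' →
      closure (convBase0 A') ∩ closure (convBase (-K')) = ∅ →
      WeaklyCompact (closure (convBase (-K'))) →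
      ∃ f : E →L[ℝ] ℝ, ∃ α : ℝ, (f, α) ∈ augWSharpCone K ∧ 0 < α ∧
        (∀ a ∈ A', a ≠ 0 → 0 < f a + α * ‖a‖) ∧
        (∀ k ∈ (-K' : Set E), k ≠ 0 → f k + α * ‖k‖ < 0) := by
    intro A' K' hA'cone hK'cone hKK' hdisj hQcomp
    obtain ⟨g, u, v, h1, h2, h3⟩ := weak_separation17
      ((convex_convexHull ℝ _).closure) isClosed_closure
      ((convex_convexHull ℝ _).closure) hQcomp hdisj
    have hu0 : 0 < u := by
      have h0m : (0 : E) ∈ closure (convBase0 A') :=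
        subset_closure (subset_convexHull ℝ _ (Set.mem_union_left _ rfl))
      have := h1 0 h0m
      simpa using this
    have hA'key : ∀ a ∈ A', a ≠ 0 → 0 < (-g) a + u * ‖a‖ := by
      intro a ha ha0
      have hna : (0 : ℝ) < ‖a‖ := norm_pos_iff.2 ha0
      have hb : ‖a‖⁻¹ • a ∈ closure (convBase0 A') :=
        subset_closure (subset_convexHull ℝ _
          (Set.mem_union_right _ (mem_normBase_smul17 hA'cone ha ha0)))
      have hgb := h1 _ hb
      have e : g (‖a‖⁻¹ • a) = ‖a‖⁻¹ * g a := by rw [map_smul, smul_eq_mul]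
      rw [e] at hgb
      have h4 := mul_lt_mul_of_pos_left hgb hna
      have e2 : ‖a‖ * (‖a‖⁻¹ * g a) = g a := by field_simp
      rw [e2] at h4
      simp only [ContinuousLinearMap.neg_apply]
      nlinarith
    have hK'key : ∀ k ∈ (-K' : Set E), k ≠ 0 → (-g) k + u * ‖k‖ < 0 := by
      intro k hk hk0
      have hnk : (0 : ℝ) < ‖k‖ := norm_pos_iff.2 hk0
      have hb : ‖k‖⁻¹ • k ∈ closure (convBase (-K')) :=
        subset_closure (subset_convexHull ℝ _ (mem_normBase_smul17 hK'cone.neg17 hk hk0))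
      have hgb := h3 _ hb
      have e : g (‖k‖⁻¹ • k) = ‖k‖⁻¹ * g k := by rw [map_smul, smul_eq_mul]
      rw [e] at hgb
      have h4 := mul_lt_mul_of_pos_left hgb hnk
      have e2 : ‖k‖ * (‖k‖⁻¹ * g k) = g k := by field_simp
      rw [e2] at h4
      have h5 := mul_lt_mul_of_pos_left h2 hnk
      simp only [ContinuousLinearMap.neg_apply]
      nlinarith
    have hsharp : (-g) ∈ sharpCone K := by
      intro k hkK hk0
      have hmem : -k ∈ (-K' : Set E) := by
        rw [Set.mem_neg, neg_neg]
        exact hKK' hkK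
      have h := hK'key (-k) hmem (neg_ne_zero.2 hk0)
      rw [norm_neg, map_neg] at h
      have hnk : (0 : ℝ) < ‖k‖ := norm_pos_iff.2 hk0
      have := mul_pos hu0 hnk
      linarith
    have hwsharp : ∀ y ∈ wClosure (normBase K), u < (-g) y := by
      have hBKQ : ∀ x ∈ normBase K, v ≤ (-g) x := by
        intro x hx
        have hxQ : -x ∈ closure (convBase (-K')) := by
          refine subset_closure (subset_convexHull ℝ _ ?_)
          refine ⟨?_, by rw [norm_neg]; exact hx.2⟩
          rw [Set.mem_neg, neg_neg]
          exact hKK' hx.1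
        have h := h3 _ hxQ
        rw [map_neg] at h
        simp only [ContinuousLinearMap.neg_apply]
        linarith
      intro y hy
      exact lt_of_lt_of_le h2 (le_on_wClosure17 (-g) hBKQ y hy)
    exact ⟨-g, u, ⟨le_of_lt hu0, hsharp, hwsharp⟩, hu0, hA'key, hK'key⟩
  tfae_have 1 → 3 := fun h => sep A K hAcone hKcone subset_rfl h hQ₁comp
  tfae_have 2 → 4 := fun h =>
    sep (closure A) (closure (convexHull ℝ K)) hclAcone hcKcone hKsubcK h hcomp
  tfae_have 4 → 3 := by
    rintro ⟨f, α, hmem, hα, hA4, hK4⟩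
    exact ⟨f, α, hmem, hα, fun a ha ha0 => hA4 a (subset_closure ha) ha0,
      fun k hk hk0 => hK4 k (hnegKsub hk) hk0⟩
  tfae_have 2 → 1 := by
    intro h
    rw [← Set.subset_empty_iff, ← h]
    exact Set.inter_subset_inter hP12 hQ12
  tfae_have 3 → 2 := by
    rintro ⟨f, α, ⟨hα0, hsharp, hwsharp⟩, hαpos, hA3, hK3⟩
    obtain ⟨y₀, hy₀, hmin⟩ := exists_min_wClosure17 f hBKne hcomp
      ((convex_convexHull ℝ _).closure) isClosed_closure
      (fun x hx => subset_closure (subset_convexHull ℝ _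
        ⟨by rw [Set.mem_neg, neg_neg]; exact hKsubcK hx.1, by rw [norm_neg]; exact hx.2⟩))
    set μ := f y₀ with hμdef
    have hμα : α < μ := hwsharp y₀ hy₀
    have hμ0 : 0 ≤ μ := le_of_lt (lt_trans hαpos hμα)
    -- A-side: f ≥ -α on closure (convBase0 (closure A))
    have hclA : ∀ a ∈ closure A, 0 ≤ f a + α * ‖a‖ := by
      have hsub : closure A ⊆ {x : E | 0 ≤ f x + α * ‖x‖} := by
        refine closure_minimal ?_ (isClosed_le (by fun_prop) (by fun_prop))
        intro a ha
        rcases eq_or_ne a 0 with rfl | ha0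
        · simp
        · exact (hA3 a ha ha0).le
      exact fun a ha => hsub ha
    have hPside : ∀ x ∈ closure (convBase0 (closure A)), -α ≤ f x := by
      have hconvD : Convex ℝ {x : E | -α ≤ f x} :=
        convex_halfSpace_ge (f.toLinearMap.isLinear) (-α)
      have hclD : IsClosed {x : E | -α ≤ f x} := isClosed_le (by fun_prop) (by fun_prop)
      have hsub1 : ({0} ∪ normBase (closure A)) ⊆ {x : E | -α ≤ f x} := by
        rintro x (rfl | hx)
        · simp only [Set.mem_setOf_eq, map_zero]
          linarith
        · have h := hclA x hx.1
          rw [hx.2] at h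
          simp only [Set.mem_setOf_eq]
          linarith
      exact fun x hx => closure_minimal (convexHull_min hsub1 hconvD) hclD hx
    -- K-side: f x ≥ μ‖x‖ on closure (convexHull ℝ K)
    have hfK : ∀ x ∈ closure (convexHull ℝ K), μ * ‖x‖ ≤ f x := by
      have hCconv : Convex ℝ {x : E | μ * ‖x‖ ≤ f x} := by
        intro x hx y hy p q hp hq hpq
        simp only [Set.mem_setOf_eq] at *
        have hn : ‖p • x + q • y‖ ≤ p * ‖x‖ + q * ‖y‖ := by
          calc ‖p • x + q • y‖ ≤ ‖p • x‖ + ‖q • y‖ := norm_add_le _ _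
            _ = p * ‖x‖ + q * ‖y‖ := by
                rw [norm_smul, norm_smul, Real.norm_of_nonneg hp, Real.norm_of_nonneg hq]
        have hf : f (p • x + q • y) = p * f x + q * f y := by
          rw [map_add, map_smul, map_smul, smul_eq_mul, smul_eq_mul]
        rw [hf]
        nlinarith [mul_le_mul_of_nonneg_left hn hμ0, mul_le_mul_of_nonneg_left hx hp,
          mul_le_mul_of_nonneg_left hy hq]
      have hCcl : IsClosed {x : E | μ * ‖x‖ ≤ f x} := isClosed_le (by fun_prop) (by fun_prop)
      have hKC : K ⊆ {x : E | μ * ‖x‖ ≤ f x} := by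
        intro k hk
        rcases eq_or_ne k 0 with rfl | hk0
        · simp
        · have hnk : (0 : ℝ) < ‖k‖ := norm_pos_iff.2 hk0
          have hb : ‖k‖⁻¹ • k ∈ wClosure (normBase K) :=
            subset_wClosure17 _ (mem_normBase_smul17 hKcone hk hk0)
          have hfb : μ ≤ f (‖k‖⁻¹ • k) := hmin _ hb
          have e : f (‖k‖⁻¹ • k) = ‖k‖⁻¹ * f k := by rw [map_smul, smul_eq_mul]
          rw [e] at hfb
          have h4 := mul_le_mul_of_nonneg_left hfb (le_of_lt hnk)
          have e2 : ‖k‖ * (‖k‖⁻¹ * f k) = f k := by field_simp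
          rw [e2] at h4
          simpa [mul_comm] using h4
      exact fun x hx => closure_minimal (convexHull_min hKC hCconv) hCcl hx
    have hQside : ∀ x ∈ closure (convBase (-(closure (convexHull ℝ K)))), f x ≤ -μ := by
      have hconvD : Convex ℝ {x : E | f x ≤ -μ} :=
        convex_halfSpace_le (f.toLinearMap.isLinear) (-μ)
      have hclD : IsClosed {x : E | f x ≤ -μ} := isClosed_le (by fun_prop) (by fun_prop)
      have hsub1 : normBase (-(closure (convexHull ℝ K))) ⊆ {x : E | f x ≤ -μ} := by
        intro y hy
        have h := hfK (-y) (Set.mem_neg.1 hy.1)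
        rw [norm_neg, hy.2, mul_one, map_neg] at h
        simp only [Set.mem_setOf_eq]
        linarith
      exact fun x hx => closure_minimal (convexHull_min hsub1 hconvD) hclD hx
    rw [Set.eq_empty_iff_forall_notMem]
    rintro x ⟨hxP, hxQ⟩
    have h1 := hPside x hxP
    have h2 := hQside x hxQ
    linarith
  tfae_finish
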